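/- Let N ≥ 3 be an integer, r ≥ 1, ξ : {1, ..., r+1} → ℂ \ {0}, and let ≺ be the relation defined by: t ≺ t' iff m(ξ(t')·ξ(t)⁻¹) ≡ m(ξ(t')) - m(ξ(t)) (mod N) and (m(ξ(t')·ξ(t)⁻¹) + m(ξ(t)·ξ(t')⁻¹) ≡ 1 (mod N) or t' < t). For each t define θ(t) := arg(ξ(t)·exp(2πi·m(ξ(t))/N)). Then t ≺ t' implies θ(t) ≤ θ(t'). -/

import Mathlib

/-- The principal argument of a nonzero complex number, normalized to lie in `[-π, π)`. -/
noncomputable def parg (z : ℂ) : ℝ :=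
  if Complex.arg z = Real.pi then -Real.pi else Complex.arg z

/-- `m(z) := ⌈-N·arg(z)/(2π)⌉` where `arg(z) ∈ [-π, π)`. -/
noncomputable def mfun (N : ℤ) (z : ℂ) : ℤ :=
  ⌈(-(N : ℝ) * parg z) / (2 * Real.pi)⌉

/-- `t ≺ t'` iff `m(ξ(t')·ξ(t)⁻¹) ≡ m(ξ(t')) - m(ξ(t)) (mod N)` and, in addition,
`m(ξ(t')·ξ(t)⁻¹) + m(ξ(t)·ξ(t')⁻¹) ≡ 1 (mod N)` or `t' < t`. -/
def prec (N : ℤ) (ξ : ℕ → ℂ) (t t' : ℕ) : Prop :=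
  mfun N (ξ t' * (ξ t)⁻¹) ≡ mfun N (ξ t') - mfun N (ξ t) [ZMOD N] ∧
  (mfun N (ξ t' * (ξ t)⁻¹) + mfun N (ξ t * (ξ t')⁻¹) ≡ 1 [ZMOD N] ∨ t' < t)

/-- `θ(t) := arg(ξ(t)·exp(2πi·m(ξ(t))/N))`, with the argument taken in `[-π, π)`. -/
noncomputable def theta (N : ℤ) (ξ : ℕ → ℂ) (t : ℕ) : ℝ :=
  parg (ξ t * Complex.exp (2 * Real.pi * Complex.I * (mfun N (ξ t) : ℂ) / (N : ℂ)))

open Real Complex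

lemma parg_coe_angle (z : ℂ) : ((parg z : ℝ) : Real.Angle) = (Complex.arg z : Real.Angle) := by
  unfold parg; split_ifs with h
  · rw [h, Real.Angle.coe_neg, Real.Angle.neg_coe_pi]
  · rfl

lemma neg_pi_le_parg (z : ℂ) : -π ≤ parg z := by
  unfold parg; split_ifs with h
  · exact le_refl _
  · exact (Complex.neg_pi_lt_arg z).le

lemma parg_lt_pi (z : ℂ) : parg z < π := by
  unfold parg; split_ifs with h
  · linarith [Real.pi_pos]
  · exact lt_of_le_of_ne (Complex.arg_le_pi z) h

lemma theta0_bounds (N : ℤ) (hN : 3 ≤ N) (z : ℂ) :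
    0 ≤ parg z + 2*π*(mfun N z)/N ∧ parg z + 2*π*(mfun N z)/N < 2*π/N := by
  have hNR : (3:ℝ) ≤ (N:ℝ) := by exact_mod_cast hN
  have hN0 : (0:ℝ) < N := by linarith
  have h2π : (0:ℝ) < 2*π := by positivity
  have h1 : (-(N:ℝ) * parg z)/(2*π) ≤ ((mfun N z : ℤ):ℝ) := Int.le_ceil _
  have h2 : (((mfun N z : ℤ)):ℝ) < (-(N:ℝ) * parg z)/(2*π) + 1 := Int.ceil_lt_add_one _
  rw [div_le_iff₀ h2π] at h1
  have h2' : ((mfun N z : ℤ):ℝ) * (2*π) < -(N:ℝ)*parg z + 2*π := by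
    have h := mul_lt_mul_of_pos_right h2 h2π
    rwa [add_mul, one_mul, div_mul_cancel₀ _ (ne_of_gt h2π)] at h
  have e : parg z + 2*π*((mfun N z : ℤ):ℝ)/N = ((N:ℝ)*parg z + ((mfun N z:ℤ):ℝ)*(2*π))/N := by
    field_simp
  rw [e]
  constructor
  · apply div_nonneg _ hN0.le; linarith
  · rw [div_lt_div_iff₀ hN0 hN0]; nlinarith

lemma arg_exp_coe (θ : ℝ) :
    (Complex.arg (Complex.exp ((θ:ℂ) * Complex.I)) : Real.Angle) = (θ : Real.Angle) := by
  have := Complex.arg_cos_add_sin_mul_I_coe_angle (θ : Real.Angle)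
  rwa [Real.Angle.cos_coe, Real.Angle.sin_coe, Complex.ofReal_cos, Complex.ofReal_sin,
    ← Complex.exp_mul_I] at this

lemma two_pi_div_le (N : ℤ) (hN : 3 ≤ N) : 2*π/(N:ℝ) ≤ 2*π/3 := by
  have hNR : (3:ℝ) ≤ (N:ℝ) := by exact_mod_cast hN
  apply div_le_div_of_nonneg_left (by positivity) (by norm_num) hNR

lemma theta_eq (N : ℤ) (hN : 3 ≤ N) (ξ : ℕ → ℂ) (t : ℕ) (hz : ξ t ≠ 0) :
    theta N ξ t = parg (ξ t) + 2*π*(mfun N (ξ t))/N := by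
  have hNR : (3:ℝ) ≤ (N:ℝ) := by exact_mod_cast hN
  have hπ := Real.pi_pos
  have hNne : (N:ℂ) ≠ 0 := by
    have : N ≠ 0 := by omega
    exact_mod_cast this
  set φ : ℝ := 2*π*(mfun N (ξ t))/N with hφ
  have hb := theta0_bounds N hN (ξ t)
  have hlo : 0 ≤ parg (ξ t) + φ := hb.1
  have hhi : parg (ξ t) + φ < π := by
    have h1 := two_pi_div_le N hN
    have := hb.2
    linarith
  have hexp : (2 * (Real.pi:ℂ) * Complex.I * ((mfun N (ξ t) : ℤ):ℂ) / (N:ℂ)) = (φ:ℂ) * Complex.I := by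
    rw [hφ]; push_cast; field_simp
  unfold theta
  rw [hexp]
  have hang : (Complex.arg (ξ t * Complex.exp ((φ:ℂ)*Complex.I)) : Real.Angle)
      = ((parg (ξ t) + φ : ℝ) : Real.Angle) := by
    rw [Complex.arg_mul_coe_angle hz (Complex.exp_ne_zero _), arg_exp_coe,
      Real.Angle.coe_add, parg_coe_angle]
  have harg : Complex.arg (ξ t * Complex.exp ((φ:ℂ)*Complex.I)) = parg (ξ t) + φ := by
    rw [Complex.arg_coe_angle_eq_iff_eq_toReal] at hang
    rw [hang, Real.Angle.toReal_coe_eq_self_iff_mem_Ioc.mpr]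
    constructor
    · linarith
    · linarith
  have hne : (ξ t * Complex.exp ((φ:ℂ)*Complex.I)).arg ≠ π := by
    rw [harg]; exact ne_of_lt hhi
  have hparg : parg (ξ t * Complex.exp ((φ:ℂ)*Complex.I))
      = (ξ t * Complex.exp ((φ:ℂ)*Complex.I)).arg := by
    unfold parg; rw [if_neg hne]
  rw [hparg, harg]

theorem stmt17 (N : ℤ) (hN : 3 ≤ N) (r : ℕ) (hr : 1 ≤ r) (ξ : ℕ → ℂ)
    (hξ : ∀ s ∈ Finset.Icc 1 (r + 1), ξ s ≠ 0)
    (t t' : ℕ) (ht : t ∈ Finset.Icc 1 (r + 1)) (ht' : t' ∈ Finset.Icc 1 (r + 1))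
    (h : prec N ξ t t') :
    theta N ξ t ≤ theta N ξ t' := by
  have hz : ξ t ≠ 0 := hξ t ht
  have hz' : ξ t' ≠ 0 := hξ t' ht'
  have hNR : (3:ℝ) ≤ (N:ℝ) := by exact_mod_cast hN
  have hπ := Real.pi_pos
  have hNne : (N:ℝ) ≠ 0 := by linarith
  set w : ℂ := ξ t' * (ξ t)⁻¹ with hw
  have hwne : w ≠ 0 := mul_ne_zero hz' (inv_ne_zero hz)
  have ha := theta0_bounds N hN (ξ t)
  have hb := theta0_bounds N hN (ξ t')
  have hc := theta0_bounds N hN w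
  rw [theta_eq N hN ξ t hz, theta_eq N hN ξ t' hz']
  -- angle identity for parg w
  have h1 : ((parg w : ℝ) : Real.Angle) = ((parg (ξ t') - parg (ξ t) : ℝ) : Real.Angle) := by
    rw [parg_coe_angle, hw, Complex.arg_mul_coe_angle hz' (inv_ne_zero hz),
      Complex.arg_inv_coe_angle, Real.Angle.coe_sub, parg_coe_angle, parg_coe_angle,
      sub_eq_add_neg]
  obtain ⟨k1, hk1⟩ := Real.Angle.angle_eq_iff_two_pi_dvd_sub.mp h1
  obtain ⟨k2, hk2⟩ := h.1.dvd
  have hk2R : ((mfun N (ξ t') : ℝ) - (mfun N (ξ t) : ℝ)) - (mfun N w : ℝ) = (N:ℝ) * k2 := by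
    exact_mod_cast hk2
  have key : (parg w + 2*π*(mfun N w)/N)
      - ((parg (ξ t') + 2*π*(mfun N (ξ t'))/N) - (parg (ξ t) + 2*π*(mfun N (ξ t))/N))
      = 2*π*((k1:ℝ) - k2) := by
    field_simp
    linear_combination (N:ℝ) * hk1 - 2*π*hk2R
  have h3 := two_pi_div_le N hN
  have h2π : (0:ℝ) < 2*π := by positivity
  have hklt : ((k1:ℝ) - k2) < 1 := by
    have : 2*π*((k1:ℝ) - k2) < 2*π*1 := by
      rw [← key]; linarith [ha.2, hb.1, hc.2, h3, hπ]
    exact (mul_lt_mul_iff_right₀ h2π).mp this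
  have hkgt : (-1:ℝ) < ((k1:ℝ) - k2) := by
    have : 2*π*(-1:ℝ) < 2*π*((k1:ℝ) - k2) := by
      rw [← key]; linarith [ha.1, hb.2, hc.1, h3, hπ]
    exact (mul_lt_mul_iff_right₀ h2π).mp this
  have hk0 : k1 - k2 = 0 := by
    have i1 : (k1 - k2 : ℤ) < 1 := by exact_mod_cast (by push_cast; linarith : ((k1 - k2 : ℤ):ℝ) < 1)
    have i2 : (-1:ℤ) < k1 - k2 := by exact_mod_cast (by push_cast; linarith : (-1:ℝ) < ((k1 - k2 : ℤ):ℝ))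
    omega
  have hzero : (k1:ℝ) - k2 = 0 := by
    have : ((k1 - k2 : ℤ):ℝ) = 0 := by rw [hk0]; norm_num
    push_cast at this; linarith
  rw [hzero, mul_zero] at key
  linarith [hc.1]
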